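/- arXiv:0903.2962 — 3 statements merged into one kernel-verified Lean document; each statement's English description precedes it below -/
import Mathlib

section
/- For the symmetric Ising channel, the supremum defining c(M_β) equals (tanh β)²: for every probability vector p = (p, 1-p) with 0 < p < 1, p ≠ 1/2, the ratio L(p M_β)/L(p) is at most (tanh β)², and the bound (tanh β)² is attained in the limit p → 1/2. -/
open Finset Filter

noncomputable def Gfun (s : ℝ) : ℝ := Real.log (1 + 2*s) - Real.log (1 - 2*s)

lemma Gfun_zero : Gfun 0 = 0 := by simp [Gfun]

lemma Gfun_neg (s : ℝ) : Gfun (-s) = - Gfun s := by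
  unfold Gfun
  rw [show (1:ℝ) + 2*(-s) = 1 - 2*s by ring, show (1:ℝ) - 2*(-s) = 1 + 2*s by ring]
  ring

lemma hasDerivAt_Gfun {s : ℝ} (h1 : -1 < 2*s) (h2 : 2*s < 1) :
    HasDerivAt Gfun (2/(1+2*s) + 2/(1-2*s)) s := by
  have hA : HasDerivAt (fun u : ℝ => 1 + 2*u) 2 s := by
    simpa using ((hasDerivAt_id s).const_mul (2:ℝ)).const_add 1
  have hB : HasDerivAt (fun u : ℝ => 1 - 2*u) (-2) s := by
    simpa using ((hasDerivAt_id s).const_mul (2:ℝ)).const_sub 1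
  have h1' : (1:ℝ) + 2*s ≠ 0 := by linarith
  have h2' : (1:ℝ) - 2*s ≠ 0 := by linarith
  have HA := (Real.hasDerivAt_log h1').comp s hA
  have HB := (Real.hasDerivAt_log h2').comp s hB
  convert HA.sub HB using 1
  · rfl
  · rfl
  · rfl
  · rw [div_eq_mul_inv, div_eq_mul_inv]
    ring

lemma key (l : ℝ) (hl0 : 0 < l) (hl1 : l ≤ 1) {s : ℝ} (hs0 : 0 ≤ s) (hs1 : 2*s < 1) :
    Gfun (l*s) ≤ l * Gfun s := by
  set h : ℝ → ℝ := fun t => l * Gfun t - Gfun (l*t) with hh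
  have hd : ∀ t ∈ Set.Icc (0:ℝ) s, HasDerivAt h
      (l * (2/(1+2*t) + 2/(1-2*t)) - (2/(1+2*(l*t)) + 2/(1-2*(l*t))) * l) t := by
    intro t ht
    obtain ⟨ht0, hts⟩ := ht
    have hb1 : -1 < 2*t := by linarith
    have hb2 : 2*t < 1 := by linarith
    have hlt0 : 0 ≤ l*t := mul_nonneg hl0.le ht0
    have hlt1 : l*t ≤ t := by nlinarith
    have hb1' : -1 < 2*(l*t) := by linarith
    have hb2' : 2*(l*t) < 1 := by linarith
    have H1 := (hasDerivAt_Gfun hb1 hb2).const_mul l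
    have H2 : HasDerivAt (fun t => Gfun (l*t)) ((2/(1+2*(l*t)) + 2/(1-2*(l*t))) * l) t := by
      have hid : HasDerivAt (fun u : ℝ => l * u) l t := by
        simpa using (hasDerivAt_id t).const_mul l
      exact (hasDerivAt_Gfun hb1' hb2').comp t hid
    exact H1.sub H2
  have hmono : MonotoneOn h (Set.Icc 0 s) := by
    apply monotoneOn_of_deriv_nonneg (convex_Icc 0 s)
    · exact fun t ht => (hd t ht).continuousAt.continuousWithinAt
    · intro t ht
      rw [interior_Icc] at ht
      exact ((hd t ⟨ht.1.le, ht.2.le⟩).differentiableAt).differentiableWithinAt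
    · intro t ht
      rw [interior_Icc] at ht
      obtain ⟨ht0, hts⟩ := ht
      rw [(hd t ⟨ht0.le, hts.le⟩).deriv]
      have hb1 : (0:ℝ) < 1 + 2*t := by linarith
      have hb2 : (0:ℝ) < 1 - 2*t := by linarith
      have hlt0 : 0 ≤ l*t := mul_nonneg hl0.le ht0.le
      have hlt1 : l*t ≤ t := by nlinarith
      have hb1' : (0:ℝ) < 1 + 2*(l*t) := by linarith
      have hb2' : (0:ℝ) < 1 - 2*(l*t) := by linarith
      have hn1 : (1:ℝ) - (2*t)^2 ≠ 0 := by nlinarith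
      have hn2 : (1:ℝ) - (2*(l*t))^2 ≠ 0 := by nlinarith
      have e1 : 2/(1+2*t) + 2/(1-2*t) = 4/(1-(2*t)^2) := by
        rw [div_add_div _ _ hb1.ne' hb2.ne', div_eq_div_iff (mul_pos hb1 hb2).ne' hn1]; ring
      have e2 : 2/(1+2*(l*t)) + 2/(1-2*(l*t)) = 4/(1-(2*(l*t))^2) := by
        rw [div_add_div _ _ hb1'.ne' hb2'.ne', div_eq_div_iff (mul_pos hb1' hb2').ne' hn2]; ring
      rw [e1, e2]
      have hpos : (0:ℝ) < 1 - (2*t)^2 := by nlinarith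
      have hle : 1 - (2*t)^2 ≤ 1 - (2*(l*t))^2 := by nlinarith
      have hdivle : 4/(1-(2*(l*t))^2) ≤ 4/(1-(2*t)^2) :=
        div_le_div_of_nonneg_left (by norm_num) hpos hle
      nlinarith
  have h0s := hmono (Set.left_mem_Icc.mpr hs0) (Set.right_mem_Icc.mpr hs0) hs0
  have hzero : h 0 = 0 := by simp [hh, Gfun_zero]
  rw [hzero] at h0s
  simp only [hh] at h0s
  linarith

lemma ineq_core (l s : ℝ) (hl0 : 0 < l) (hl1 : l ≤ 1) (h1 : -1 < 2*s) (h2 : 2*s < 1) :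
    l*s * Gfun (l*s) ≤ l^2 * (s * Gfun s) := by
  rcases le_or_gt 0 s with hs | hs
  · have K := key l hl0 hl1 hs h2
    have h3 : (0:ℝ) ≤ l*s := mul_nonneg hl0.le hs
    have := mul_le_mul_of_nonneg_left K h3
    nlinarith [this]
  · have hs0 : (0:ℝ) ≤ -s := by linarith
    have hs1 : 2*(-s) < 1 := by linarith
    have K := key l hl0 hl1 hs0 hs1
    rw [show l*(-s) = -(l*s) by ring, Gfun_neg, Gfun_neg] at K
    have h3 : (0:ℝ) ≤ -(l*s) := by nlinarith
    have := mul_le_mul_of_nonneg_left K h3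
    nlinarith [this]

lemma tanh_formula (β : ℝ) :
    Real.tanh β = (Real.exp (2*β) - 1) / (Real.exp (2*β) + 1) := by
  rw [Real.tanh_eq_sinh_div_cosh, Real.sinh_eq, Real.cosh_eq]
  have h2 : Real.exp (2*β) = Real.exp β * Real.exp β := by
    rw [← Real.exp_add]; ring_nf
  have hneg : Real.exp (-β) = 1 / Real.exp β := by
    rw [Real.exp_neg]; exact inv_eq_one_div _
  rw [h2, hneg]
  have he : Real.exp β ≠ 0 := (Real.exp_pos β).ne'
  have hp : (0:ℝ) < Real.exp β * Real.exp β + 1 := by positivity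
  field_simp

theorem ising_contraction_tanh_sq (β : ℝ) (hβ : 0 < β)
    (M : Matrix (Fin 2) (Fin 2) ℝ)
    (hM : ∀ i j, M i j = if i = j then Real.exp (2*β) / (Real.exp (2*β) + 1)
                          else 1 / (Real.exp (2*β) + 1))
    (L : (Fin 2 → ℝ) → ℝ)
    (hL : ∀ r, L r = ∑ i, (r i - 1/2) * Real.log (2 * r i)) :
    (∀ p : Fin 2 → ℝ, (∀ i, 0 < p i) → (∑ i, p i = 1) →
        L (fun j => ∑ i, p i * M i j) ≤ (Real.tanh β)^2 * L p) ∧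
    Tendsto (fun t : ℝ =>
        L (fun j => ∑ i, (fun i : Fin 2 => if i = 0 then t else 1 - t) i * M i j) /
          L (fun i : Fin 2 => if i = 0 then t else 1 - t))
      (nhdsWithin (1/2 : ℝ) {(1/2 : ℝ)}ᶜ) (nhds ((Real.tanh β)^2)) := by
  have hE1 : (1:ℝ) < Real.exp (2*β) := by
    have := Real.exp_lt_exp.mpr (show (0:ℝ) < 2*β by linarith)
    rwa [Real.exp_zero] at this
  have hEne : Real.exp (2*β) + 1 ≠ 0 := by positivity
  set l : ℝ := Real.tanh β with hldef
  have hltanh : l = (Real.exp (2*β) - 1) / (Real.exp (2*β) + 1) := tanh_formula β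
  have hl0 : 0 < l := by
    rw [hltanh]
    apply div_pos (by linarith) (by linarith)
  have hl1 : l < 1 := by
    rw [hltanh, div_lt_one (by linarith)]
    linarith
  have hq0 : ∀ u v : ℝ, u + v = 1 → u * M 0 0 + v * M 1 0 = 1/2 + l * (u - 1/2) := by
    intro u v huv
    rw [hM 0 0, hM 1 0]
    simp only [if_pos rfl, if_neg (show (1:Fin 2) ≠ 0 by decide), if_true]
    have hv : v = 1 - u := by linarith
    rw [hv, hltanh]
    field_simp
    ring
  have hq1 : ∀ u v : ℝ, u + v = 1 → u * M 0 1 + v * M 1 1 = 1/2 - l * (u - 1/2) := by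
    intro u v huv
    rw [hM 0 1, hM 1 1]
    simp only [if_pos rfl, if_neg (show (0:Fin 2) ≠ 1 by decide), if_true]
    have hv : v = 1 - u := by linarith
    rw [hv, hltanh]
    field_simp
    ring
  have hLq : ∀ u v : ℝ, u + v = 1 →
      L (fun j => ∑ i, (fun i : Fin 2 => if i = 0 then u else v) i * M i j)
        = (l*(u - 1/2)) * Gfun (l*(u - 1/2)) := by
    intro u v huv
    rw [hL]
    rw [Fin.sum_univ_two]
    simp only [Fin.sum_univ_two]
    norm_num
    rw [hq0 u v huv, hq1 u v huv]
    rw [show (2:ℝ)*(1/2 + l*(u - 1/2)) = 1 + 2*(l*(u-1/2)) by ring,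
        show (2:ℝ)*(1/2 - l*(u - 1/2)) = 1 - 2*(l*(u-1/2)) by ring]
    simp only [Gfun]
    ring
  have hLp : ∀ u v : ℝ, u + v = 1 →
      L (fun i : Fin 2 => if i = 0 then u else v) = (u - 1/2) * Gfun (u - 1/2) := by
    intro u v huv
    rw [hL, Fin.sum_univ_two]
    norm_num
    have hv : v = 1 - u := by linarith
    rw [hv]
    rw [show (2:ℝ)*u = 1 + 2*(u - 1/2) by ring,
        show (2:ℝ)*(1-u) = 1 - 2*(u-1/2) by ring]
    simp only [Gfun]
    ring
  constructor
  · intro p hp hsum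
    rw [Fin.sum_univ_two] at hsum
    have hp0 := hp 0
    have hp1 := hp 1
    have h1 : -1 < 2*(p 0 - 1/2) := by linarith
    have h2 : 2*(p 0 - 1/2) < 1 := by linarith
    have hpe : p = fun i : Fin 2 => if i = 0 then p 0 else p 1 := by
      funext i
      fin_cases i <;> simp
    have e1 : L (fun j => ∑ i, p i * M i j) = (l*(p 0 - 1/2)) * Gfun (l*(p 0 - 1/2)) := by
      conv_lhs => rw [hpe]
      exact hLq (p 0) (p 1) hsum
    have e2 : L p = (p 0 - 1/2) * Gfun (p 0 - 1/2) := by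
      conv_lhs => rw [hpe]
      exact hLp (p 0) (p 1) hsum
    rw [e1, e2]
    exact ineq_core l (p 0 - 1/2) hl0 hl1.le h1 h2
  · have hG4 : Tendsto (fun s => Gfun s / s) (nhdsWithin (0:ℝ) {(0:ℝ)}ᶜ) (nhds 4) := by
      have hD : HasDerivAt Gfun 4 0 := by
        have := hasDerivAt_Gfun (s := 0) (by norm_num) (by norm_num)
        norm_num at this
        exact this
      have h := hasDerivAt_iff_tendsto_slope.mp hD
      refine h.congr fun s => ?_
      rw [slope_def_field, Gfun_zero]
      ring
    have hmul : Tendsto (fun s : ℝ => l*s) (nhdsWithin (0:ℝ) {(0:ℝ)}ᶜ)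
        (nhdsWithin (0:ℝ) {(0:ℝ)}ᶜ) := by
      apply tendsto_nhdsWithin_of_tendsto_nhds_of_eventually_within
      · have h0 : Tendsto (fun s : ℝ => l*s) (nhds 0) (nhds (l*0)) :=
          (continuous_const.mul continuous_id).tendsto 0
        rw [mul_zero] at h0
        exact h0.mono_left nhdsWithin_le_nhds
      · filter_upwards [self_mem_nhdsWithin] with s hs
        simp only [Set.mem_compl_iff, Set.mem_singleton_iff] at hs ⊢
        exact mul_ne_zero hl0.ne' hs
    have hG4' : Tendsto (fun s => Gfun (l*s) / (l*s)) (nhdsWithin (0:ℝ) {(0:ℝ)}ᶜ) (nhds 4) :=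
      hG4.comp hmul
    have hdiv : Tendsto (fun s => l^2 * ((Gfun (l*s) / (l*s)) / (Gfun s / s)))
        (nhdsWithin (0:ℝ) {(0:ℝ)}ᶜ) (nhds (l^2 * (4/4))) :=
      (hG4'.div hG4 (by norm_num)).const_mul (l^2)
    have hR : Tendsto (fun s => (l*s * Gfun (l*s)) / (s * Gfun s))
        (nhdsWithin (0:ℝ) {(0:ℝ)}ᶜ) (nhds (l^2)) := by
      have h44 : l^2 * ((4:ℝ)/4) = l^2 := by norm_num
      rw [← h44]
      refine Tendsto.congr' ?_ hdiv
      filter_upwards [self_mem_nhdsWithin] with s hs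
      simp only [Set.mem_compl_iff, Set.mem_singleton_iff] at hs
      by_cases hGs : Gfun s = 0
      · simp [hGs]
      · have hls : l*s ≠ 0 := mul_ne_zero hl0.ne' hs
        field_simp
    have hshift : Tendsto (fun t : ℝ => t - 1/2) (nhdsWithin (1/2:ℝ) {(1/2:ℝ)}ᶜ)
        (nhdsWithin (0:ℝ) {(0:ℝ)}ᶜ) := by
      apply tendsto_nhdsWithin_of_tendsto_nhds_of_eventually_within
      · have h0 : Tendsto (fun t : ℝ => t - 1/2) (nhds (1/2)) (nhds ((1:ℝ)/2 - 1/2)) :=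
          (continuous_id.sub continuous_const).tendsto ((1:ℝ)/2)
        norm_num at h0
        exact h0.mono_left nhdsWithin_le_nhds
      · filter_upwards [self_mem_nhdsWithin] with t ht
        simp only [Set.mem_compl_iff, Set.mem_singleton_iff] at ht ⊢
        intro h
        apply ht
        linarith
    have hcomp := hR.comp hshift
    refine Tendsto.congr (fun t => ?_) hcomp
    simp only [Function.comp]
    rw [hLq t (1-t) (by ring), hLp t (1-t) (by ring)]
end

section
/- For fixed probability vectors p and α with positive entries, the map M ↦ L(p M^rev) is convex on the set of stochastic matrices M with positive entries satisfying α M = α. -/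
open Finset

lemma key_convex (a : ℝ) (ha : 0 < a) :
    ConvexOn ℝ (Set.Ioi (0:ℝ)) (fun x => (x - a) * Real.log (x / a)) := by
  have c1 : ConvexOn ℝ (Set.Ioi (0:ℝ)) (fun x => x * Real.log x) :=
    Real.convexOn_mul_log.subset Set.Ioi_subset_Ici_self (convex_Ioi 0)
  have c2 : ConvexOn ℝ (Set.Ioi (0:ℝ)) (fun x => a • (-(Real.log x))) :=
    ConvexOn.smul ha.le (strictConcaveOn_log_Ioi.concaveOn.neg)
  have c3 : ConvexOn ℝ (Set.Ioi (0:ℝ))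
      (fun x => ((-Real.log a) • (LinearMap.id : ℝ →ₗ[ℝ] ℝ)) x + a * Real.log a) :=
    ConvexOn.add (((-Real.log a) • (LinearMap.id : ℝ →ₗ[ℝ] ℝ)).convexOn (convex_Ioi 0))
      (convexOn_const _ (convex_Ioi 0))
  have := (c1.add c2).add c3
  refine ConvexOn.congr this (fun x hx => ?_)
  have hx : (0:ℝ) < x := hx
  rw [Real.log_div hx.ne' ha.ne']
  simp only [Pi.add_apply, LinearMap.smul_apply, LinearMap.id_coe, id_eq, smul_eq_mul]
  ring

theorem L_pMrev_convex_in_M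
    (q : ℕ) (hq : 1 ≤ q) (α p : Fin q → ℝ)
    (hα : ∀ i, 0 < α i) (hαs : ∑ i, α i = 1)
    (hp : ∀ i, 0 < p i) (hps : ∑ i, p i = 1)
    (L : (Fin q → ℝ) → ℝ)
    (hL : ∀ r, L r = ∑ i, (r i - α i) * Real.log (r i / α i))
    (M₁ M₂ : Matrix (Fin q) (Fin q) ℝ)
    (hM₁ : ∀ i j, 0 < M₁ i j) (hrow₁ : ∀ i, ∑ j, M₁ i j = 1)
    (hM₂ : ∀ i j, 0 < M₂ i j) (hrow₂ : ∀ i, ∑ j, M₂ i j = 1)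
    (hinv₁ : ∀ j, ∑ i, α i * M₁ i j = α j)
    (hinv₂ : ∀ j, ∑ i, α i * M₂ i j = α j)
    (lam : ℝ) (hlam : lam ∈ Set.Icc (0:ℝ) 1) :
    L (fun j => ∑ i, p i *
        (α j * (lam * M₁ j i + (1 - lam) * M₂ j i) / α i))
      ≤ lam * L (fun j => ∑ i, p i * (α j * M₁ j i / α i))
        + (1 - lam) * L (fun j => ∑ i, p i * (α j * M₂ j i / α i)) := by
  haveI : NeZero q := ⟨by omega⟩
  obtain ⟨hl0, hl1⟩ := hlam
  set r₁ : Fin q → ℝ := fun j => ∑ i, p i * (α j * M₁ j i / α i) with hr₁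
  set r₂ : Fin q → ℝ := fun j => ∑ i, p i * (α j * M₂ j i / α i) with hr₂
  have hpos₁ : ∀ j, r₁ j ∈ Set.Ioi (0:ℝ) := by
    intro j
    rw [Set.mem_Ioi, hr₁]
    exact Finset.sum_pos (fun i _ =>
      mul_pos (hp i) (div_pos (mul_pos (hα j) (hM₁ j i)) (hα i))) Finset.univ_nonempty
  have hpos₂ : ∀ j, r₂ j ∈ Set.Ioi (0:ℝ) := by
    intro j
    rw [Set.mem_Ioi, hr₂]
    exact Finset.sum_pos (fun i _ =>
      mul_pos (hp i) (div_pos (mul_pos (hα j) (hM₂ j i)) (hα i))) Finset.univ_nonempty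
  have hcomb : ∀ j, (∑ i, p i *
      (α j * (lam * M₁ j i + (1 - lam) * M₂ j i) / α i))
      = lam * r₁ j + (1 - lam) * r₂ j := by
    intro j
    rw [hr₁, hr₂, Finset.mul_sum, Finset.mul_sum, ← Finset.sum_add_distrib]
    refine Finset.sum_congr rfl (fun i _ => ?_)
    field_simp
  rw [hL, hL, hL]
  simp only [hcomb]
  rw [Finset.mul_sum, Finset.mul_sum, ← Finset.sum_add_distrib]
  refine Finset.sum_le_sum (fun j _ => ?_)
  have := (key_convex (α j) (hα j)).2 (hpos₁ j) (hpos₂ j) hl0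
    (by linarith : (0:ℝ) ≤ 1 - lam) (by ring)
  simpa using this
end

section
/- Lemma 1 (boundary entropy identity) in the one-level case: for a star graph with root and children w₁,...,w_d, the expectation over boundary configurations ξ (drawn from the chain) of the symmetrized entropy L(π^ξ) of the posterior root distribution equals the double α-average of relative entropies between conditional boundary laws: ∫ P(dξ) L(π^ξ) = ∑_{x₁,x₂} α(x₁) α(x₂) S(Q^{x₂} | Q^{x₁}). -/
open Finset

/-- Boundary entropy identity (Lemma 1) for the one-level (star) tree:
the expected symmetrized entropy of the posterior root distribution equals the
double `α`-average of relative entropies between conditional boundary laws. -/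
theorem boundary_entropy_identity_star
    (q d : ℕ) (hq : 1 ≤ q) (hd : 1 ≤ d)
    (M : Matrix (Fin q) (Fin q) ℝ) (α : Fin q → ℝ)
    (hM : ∀ i j, 0 < M i j) (hrow : ∀ i, ∑ j, M i j = 1)
    (hα : ∀ i, 0 < α i) (hαs : ∑ i, α i = 1)
    (hinv : ∀ j, ∑ i, α i * M i j = α j)
    (Q : Fin q → (Fin d → Fin q) → ℝ)
    (hQ : ∀ j ξ, Q j ξ = ∏ k, M j (ξ k))
    (Pbd : (Fin d → Fin q) → ℝ)
    (hPbd : ∀ ξ, Pbd ξ = ∑ x, α x * Q x ξ)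
    (pi : (Fin d → Fin q) → Fin q → ℝ)
    (hpi : ∀ ξ s, pi ξ s = α s * Q s ξ / Pbd ξ)
    (L : (Fin q → ℝ) → ℝ)
    (hL : ∀ p, L p = ∑ i, (p i - α i) * Real.log (p i / α i))
    (S : ((Fin d → Fin q) → ℝ) → ((Fin d → Fin q) → ℝ) → ℝ)
    (hS : ∀ Q₁ Q₂, S Q₁ Q₂ = ∑ ξ, Q₁ ξ * Real.log (Q₁ ξ / Q₂ ξ)) :
    ∑ ξ, Pbd ξ * L (pi ξ) = ∑ x₁, ∑ x₂, α x₁ * α x₂ * S (Q x₂) (Q x₁) := by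
  have hq0 : (univ : Finset (Fin q)).Nonempty := ⟨⟨0, hq⟩, mem_univ _⟩
  have hQpos : ∀ j ξ, 0 < Q j ξ := fun j ξ => by
    rw [hQ]; exact Finset.prod_pos fun k _ => hM j (ξ k)
  have hPpos : ∀ ξ, 0 < Pbd ξ := fun ξ => by
    rw [hPbd]; exact Finset.sum_pos (fun x _ => mul_pos (hα x) (hQpos x ξ)) hq0
  set A : ℝ := ∑ ξ, ∑ i, α i * Q i ξ * Real.log (Q i ξ) with hA
  set C : ℝ := ∑ ξ, ∑ i, α i * Pbd ξ * Real.log (Q i ξ) with hC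
  have hLHS : ∑ ξ, Pbd ξ * L (pi ξ) = A - C := by
    rw [hA, hC, ← Finset.sum_sub_distrib]
    refine Finset.sum_congr rfl fun ξ _ => ?_
    have hP := (hPpos ξ).ne'
    have key : ∀ i : Fin q, Pbd ξ * ((pi ξ i - α i) * Real.log (pi ξ i / α i))
        = (α i * Q i ξ * Real.log (Q i ξ) - α i * Pbd ξ * Real.log (Q i ξ))
          - (α i * Q i ξ * Real.log (Pbd ξ) - α i * (Pbd ξ * Real.log (Pbd ξ))) := by
      intro i
      have hαi := (hα i).ne'
      have hpiq : pi ξ i / α i = Q i ξ / Pbd ξ := by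
        rw [hpi]; field_simp
      rw [hpiq, Real.log_div (hQpos i ξ).ne' hP, hpi]
      field_simp
    rw [hL, Finset.mul_sum]
    calc (∑ i, Pbd ξ * ((pi ξ i - α i) * Real.log (pi ξ i / α i)))
        = ∑ i, ((α i * Q i ξ * Real.log (Q i ξ) - α i * Pbd ξ * Real.log (Q i ξ))
            - (α i * Q i ξ * Real.log (Pbd ξ) - α i * (Pbd ξ * Real.log (Pbd ξ)))) := by
          exact Finset.sum_congr rfl fun i _ => key i
      _ = ∑ i, (α i * Q i ξ * Real.log (Q i ξ) - α i * Pbd ξ * Real.log (Q i ξ)) := by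
          have hc : ∑ i, α i * Q i ξ * Real.log (Pbd ξ) = Pbd ξ * Real.log (Pbd ξ) := by
            rw [← Finset.sum_mul, ← hPbd]
          have hd2 : ∑ i, α i * (Pbd ξ * Real.log (Pbd ξ)) = Pbd ξ * Real.log (Pbd ξ) := by
            rw [← Finset.sum_mul, hαs, one_mul]
          have h0 : ∑ i, (α i * Q i ξ * Real.log (Pbd ξ) - α i * (Pbd ξ * Real.log (Pbd ξ))) = 0 := by
            rw [Finset.sum_sub_distrib, hc, hd2, sub_self]
          rw [Finset.sum_sub_distrib, h0, sub_zero]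
      _ = (∑ i, α i * Q i ξ * Real.log (Q i ξ)) - ∑ i, α i * Pbd ξ * Real.log (Q i ξ) :=
          Finset.sum_sub_distrib _ _
  have hRHS : ∑ x₁, ∑ x₂, α x₁ * α x₂ * S (Q x₂) (Q x₁) = A - C := by
    have step : ∀ x₁ : Fin q, ∑ x₂, α x₁ * α x₂ * S (Q x₂) (Q x₁)
        = α x₁ * A - ∑ ξ, α x₁ * Pbd ξ * Real.log (Q x₁ ξ) := by
      intro x₁
      have key : ∀ x₂ : Fin q, α x₁ * α x₂ * S (Q x₂) (Q x₁)
          = α x₁ * (∑ ξ, α x₂ * Q x₂ ξ * Real.log (Q x₂ ξ))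
            - ∑ ξ, (α x₂ * Q x₂ ξ) * (α x₁ * Real.log (Q x₁ ξ)) := by
        intro x₂
        rw [hS, Finset.mul_sum, Finset.mul_sum, ← Finset.sum_sub_distrib]
        refine Finset.sum_congr rfl fun ξ _ => ?_
        rw [Real.log_div (hQpos x₂ ξ).ne' (hQpos x₁ ξ).ne']
        ring
      calc (∑ x₂, α x₁ * α x₂ * S (Q x₂) (Q x₁))
          = ∑ x₂, (α x₁ * (∑ ξ, α x₂ * Q x₂ ξ * Real.log (Q x₂ ξ))
              - ∑ ξ, (α x₂ * Q x₂ ξ) * (α x₁ * Real.log (Q x₁ ξ))) := by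
            exact Finset.sum_congr rfl fun x₂ _ => key x₂
        _ = α x₁ * (∑ x₂, ∑ ξ, α x₂ * Q x₂ ξ * Real.log (Q x₂ ξ))
              - ∑ ξ, (∑ x₂, α x₂ * Q x₂ ξ) * (α x₁ * Real.log (Q x₁ ξ)) := by
            rw [Finset.sum_sub_distrib, Finset.mul_sum, Finset.sum_comm]
            simp [Finset.sum_mul]
        _ = α x₁ * A - ∑ ξ, α x₁ * Pbd ξ * Real.log (Q x₁ ξ) := by
            rw [Finset.sum_comm, ← hA]
            congr 1
            exact Finset.sum_congr rfl fun ξ _ => by rw [← hPbd]; ring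
    calc (∑ x₁, ∑ x₂, α x₁ * α x₂ * S (Q x₂) (Q x₁))
        = ∑ x₁, (α x₁ * A - ∑ ξ, α x₁ * Pbd ξ * Real.log (Q x₁ ξ)) := by
          exact Finset.sum_congr rfl fun x₁ _ => step x₁
      _ = (∑ x₁, α x₁) * A - ∑ x₁, ∑ ξ, α x₁ * Pbd ξ * Real.log (Q x₁ ξ) := by
          rw [Finset.sum_sub_distrib, Finset.sum_mul]
      _ = A - C := by rw [hαs, one_mul, Finset.sum_comm, hC]
  rw [hLHS, hRHS]
end
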